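/- Let h, g : ℂ² → ℂ² be holomorphic maps with h(0) = g(0) = 0 whose differentials at 0 are diagonal and invertible, say dh₀ = diag(λ, μ) and dg₀ = diag(λ', μ'). Define the shears h^{[c]}(z₁,z₂) = (λz₁ + Az₂², μz₂) and g^{[c]}(z₁,z₂) = (λ'z₁ + A'z₂², μ'z₂), where A = (1/2)·∂²h₁/∂z₂²(0) and A' = (1/2)·∂²g₁/∂z₂²(0). Then the shearing of the composition h∘g equals the composition of the shearings: (h∘g)^{[c]}(z) = h^{[c]}(g^{[c]}(z)) for all z ∈ ℂ². -/

import Mathlib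

open Complex

noncomputable section

/-- The coefficient `A = (1/2)·∂²h₁/∂z₂²(0)` of `z₂²` in the first component of the Taylor
expansion of `h` at the origin. -/
def shearCoef (h : ℂ × ℂ → ℂ × ℂ) : ℂ :=
  (1 / 2 : ℂ) * iteratedDeriv 2 (fun w : ℂ => (h (0, w)).1) 0

open Filter Topology Metric in
private lemma iteratedDeriv_two_eq (f : ℂ → ℂ) (x : ℂ) :
    iteratedDeriv 2 f x = deriv (deriv f) x := by
  rw [show (2 : ℕ) = 1 + 1 from rfl, iteratedDeriv_succ, iteratedDeriv_one]

open Filter Topology Metric in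
private lemma taylor2_tendsto (f : ℂ → ℂ) (hf : Differentiable ℂ f)
    (h0 : f 0 = 0) (h1 : deriv f 0 = 0) :
    Tendsto (fun w => f w / w ^ 2) (𝓝[≠] (0 : ℂ)) (𝓝 (iteratedDeriv 2 f 0 / 2)) := by
  obtain ⟨p, hp⟩ := hf.analyticAt 0
  have hcoeff : iteratedDeriv 2 f 0 = 2 * p.coeff 2 := by
    obtain ⟨r, hpr⟩ := hp
    have h2 := hpr.factorial_smul (y := (1 : ℂ)) 2
    have hc : p.coeff 2 = p 2 fun _ => 1 := rfl
    rw [iteratedDeriv_eq_iteratedFDeriv, ← h2, hc, nsmul_eq_mul]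
    norm_num
  set d2 : ℂ → ℂ := dslope (dslope f 0) 0 with hd2def
  have hd2 : HasFPowerSeriesAt d2 p.fslope.fslope 0 :=
    hp.has_fpower_series_dslope_fslope.has_fpower_series_dslope_fslope
  have hval : d2 0 = p.coeff 2 := by
    have hz := hd2.coeff_zero (fun _ => 1)
    have : p.fslope.fslope.coeff 0 = d2 0 := hz
    rw [FormalMultilinearSeries.coeff_fslope, FormalMultilinearSeries.coeff_fslope] at this
    exact this.symm
  have hcont : Tendsto d2 (𝓝[≠] (0 : ℂ)) (𝓝 (d2 0)) :=
    (hd2.analyticAt.continuousAt).continuousWithinAt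
  have hmain : Tendsto (fun w => f w / w ^ 2) (𝓝[≠] (0 : ℂ)) (𝓝 (d2 0)) := by
    refine hcont.congr' ?_
    filter_upwards [self_mem_nhdsWithin] with w hw
    have hw' : w ≠ 0 := hw
    rw [hd2def, dslope_of_ne _ hw', slope_def_field, dslope_of_ne _ hw', slope_def_field,
      dslope_same, h1, h0]
    simp only [sub_zero]
    rw [div_div, ← pow_two]
  convert hmain using 2
  rw [hval, hcoeff]
  ring

private lemma iteratedDeriv_two_comp (k b : ℂ → ℂ) (hk : Differentiable ℂ k)
    (hb : Differentiable ℂ b) :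
    iteratedDeriv 2 (fun w => k (b w)) 0 =
      deriv (deriv k) (b 0) * deriv b 0 ^ 2 + deriv k (b 0) * iteratedDeriv 2 b 0 := by
  have hk' : Differentiable ℂ (deriv k) := by
    rw [← differentiableOn_univ]
    exact ((analyticOnNhd_univ_iff_differentiable.mpr hk).deriv).differentiableOn
  have hb' : Differentiable ℂ (deriv b) := by
    rw [← differentiableOn_univ]
    exact ((analyticOnNhd_univ_iff_differentiable.mpr hb).deriv).differentiableOn
  have h1 : deriv (fun w => k (b w)) = fun w => deriv k (b w) * deriv b w := by
    funext w
    exact (((hk (b w)).hasDerivAt).comp w (hb w).hasDerivAt).deriv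
  rw [iteratedDeriv_two_eq, h1, iteratedDeriv_two_eq]
  have h2 : HasDerivAt (fun w => deriv k (b w) * deriv b w)
      ((deriv (deriv k) (b 0) * deriv b 0) * deriv b 0 + deriv k (b 0) * deriv (deriv b) 0) 0 :=
    (((hk' (b 0)).hasDerivAt).comp 0 (hb 0).hasDerivAt).mul (hb' 0).hasDerivAt
  rw [h2.deriv]
  ring


set_option maxHeartbeats 2000000 in
open Filter Topology Metric MeasureTheory intervalIntegral Real in
private lemma shear_key (h g : ℂ × ℂ → ℂ × ℂ)
    (hh : Differentiable ℂ h) (hg : Differentiable ℂ g)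
    (h0 : h 0 = 0) (g0 : g 0 = 0)
    (lam mu lam' mu' : ℂ)
    (hdh : ∀ z : ℂ × ℂ, fderiv ℂ h 0 z = (lam * z.1, mu * z.2))
    (hdg : ∀ z : ℂ × ℂ, fderiv ℂ g 0 z = (lam' * z.1, mu' * z.2)) :
    iteratedDeriv 2 (fun w : ℂ => ((h ∘ g) (0, w)).1) 0 =
      lam * iteratedDeriv 2 (fun w : ℂ => (g (0, w)).1) 0 +
        mu' ^ 2 * iteratedDeriv 2 (fun w : ℂ => (h (0, w)).1) 0 := by
  set a : ℂ → ℂ := fun w => (g (0, w)).1 with ha_def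
  set k : ℂ → ℂ := fun w => (h (0, w)).1 with hk_def
  set u : ℂ → ℂ := fun w : ℂ => ((h ∘ g) (0, w)).1 with hu_def
  set bb : ℂ → ℂ := fun w => (g (0, w)).2 with hb_def
  have hz : ((0 : ℂ), (0 : ℂ)) = (0 : ℂ × ℂ) := rfl
  have hline : Differentiable ℂ (fun w : ℂ => ((0 : ℂ), w)) :=
    (differentiable_const _).prodMk differentiable_id
  have hgl : Differentiable ℂ (fun w : ℂ => g (0, w)) := hg.comp hline
  have ha : Differentiable ℂ a := hgl.fst
  have hbb : Differentiable ℂ bb := hgl.snd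
  have hk : Differentiable ℂ k := (hh.comp hline).fst
  have hufun : Differentiable ℂ u := ((hh.comp hg).comp hline).fst
  have hg0' : g ((0 : ℂ), (0 : ℂ)) = 0 := by rw [hz, g0]
  have ha0 : a 0 = 0 := by simp only [ha_def, hg0', Prod.fst_zero]
  have hb0 : bb 0 = 0 := by simp only [hb_def, hg0', Prod.snd_zero]
  have hk0 : k 0 = 0 := by simp only [hk_def, hz, h0, Prod.fst_zero]
  have hu0 : u 0 = 0 := by
    simp only [hu_def, Function.comp_apply, hg0', h0, Prod.fst_zero]
  -- first derivatives at 0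
  have hlineD : HasDerivAt (fun w : ℂ => ((0 : ℂ), w)) (((0 : ℂ), (1 : ℂ))) 0 :=
    (hasDerivAt_const 0 (0 : ℂ)).prodMk (hasDerivAt_id 0)
  have hglD : HasDerivAt (fun w : ℂ => g (0, w)) ((0 : ℂ), mu') 0 := by
    have h1 := (hg ((0 : ℂ), (0 : ℂ))).hasFDerivAt.comp_hasDerivAt 0 hlineD
    rw [hz, hdg] at h1
    simpa [Function.comp_def] using h1
  have fstD : ∀ {F : ℂ → ℂ × ℂ} {F' : ℂ × ℂ} {x : ℂ}, HasDerivAt F F' x →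
      HasDerivAt (fun w => (F w).1) F'.1 x := by
    intro F F' x hF
    simpa [Function.comp_def] using (ContinuousLinearMap.fst ℂ ℂ ℂ).hasFDerivAt.comp_hasDerivAt x hF
  have sndD : ∀ {F : ℂ → ℂ × ℂ} {F' : ℂ × ℂ} {x : ℂ}, HasDerivAt F F' x →
      HasDerivAt (fun w => (F w).2) F'.2 x := by
    intro F F' x hF
    simpa [Function.comp_def] using (ContinuousLinearMap.snd ℂ ℂ ℂ).hasFDerivAt.comp_hasDerivAt x hF
  have haD : HasDerivAt a (0 : ℂ) 0 := fstD hglD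
  have hbbD : HasDerivAt bb mu' 0 := sndD hglD
  have hkD : HasDerivAt k (0 : ℂ) 0 := by
    have h1 := (hh ((0 : ℂ), (0 : ℂ))).hasFDerivAt.comp_hasDerivAt 0 hlineD
    rw [hz, hdh] at h1
    have h2 := fstD h1
    simpa [Function.comp] using h2
  have huD : HasDerivAt u (0 : ℂ) 0 := by
    have h1 := (hh (g ((0 : ℂ), (0 : ℂ)))).hasFDerivAt.comp_hasDerivAt 0 hglD
    rw [hg0', hdh] at h1
    have h2 := fstD h1
    simpa [Function.comp_def, hu_def] using h2
  -- second derivative of k ∘ bb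
  have hKBval : iteratedDeriv 2 (fun w => k (bb w)) 0 = mu' ^ 2 * iteratedDeriv 2 k 0 := by
    rw [iteratedDeriv_two_comp k bb hk hbb, hb0, hbbD.deriv, hkD.deriv,
      iteratedDeriv_two_eq k 0]
    ring
  -- limits for a and k ∘ bb
  have hA := taylor2_tendsto a ha ha0 haD.deriv
  have hKB : Tendsto (fun w => k (bb w) / w ^ 2) (𝓝[≠] (0 : ℂ))
      (𝓝 (iteratedDeriv 2 (fun w => k (bb w)) 0 / 2)) := by
    refine taylor2_tendsto _ (hk.comp hbb) (by simp [hb0, hk0]) ?_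
    have h2 : HasDerivAt (fun w => k (bb w)) (0 * mu') 0 := by
      have h3 : HasDerivAt k 0 (bb 0) := by rw [hb0]; exact hkD
      exact h3.comp 0 hbbD
    simpa using h2.deriv
  -- the Cauchy integral kernel
  set J : ℂ → ℂ := fun w =>
    ∮ ζ in C(0, 1), ((ζ - a w)⁻¹ * ζ⁻¹) * (h (ζ, bb w)).1 with hJ_def
  have hta : Tendsto a (𝓝 (0 : ℂ)) (𝓝 0) := by
    have h1 : ContinuousAt a 0 := ha.continuous.continuousAt
    rw [ContinuousAt, ha0] at h1
    exact h1
  have htb : Tendsto bb (𝓝 (0 : ℂ)) (𝓝 0) := by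
    have h1 : ContinuousAt bb 0 := hbb.continuous.continuousAt
    rw [ContinuousAt, hb0] at h1
    exact h1
  have hcm : ∀ θ : ℝ, ‖circleMap 0 1 θ‖ = 1 := fun θ => by
    simp
  have hcm0 : ∀ θ : ℝ, circleMap (0 : ℂ) 1 θ ≠ 0 := fun θ => by
    intro hc
    have h1 := hcm θ
    rw [hc] at h1
    simp at h1
  have hsubne : ∀ (θ : ℝ) (x : ℂ), ‖x‖ ≤ 1 / 2 → circleMap 0 1 θ - x ≠ 0 := by
    intro θ x hx hc
    have h1 : ‖circleMap 0 1 θ‖ - ‖x‖ ≤ ‖circleMap 0 1 θ - x‖ := norm_sub_norm_le _ _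
    rw [hc, hcm θ] at h1
    simp only [norm_zero] at h1
    linarith
  have hJcont : Tendsto J (𝓝 (0 : ℂ)) (𝓝 (J 0)) := by
    obtain ⟨M, hM⟩ : ∃ M, ∀ p ∈ (sphere (0 : ℂ) 1) ×ˢ closedBall (0 : ℂ) 1, ‖(h p).1‖ ≤ M :=
      ((isCompact_sphere (0 : ℂ) 1).prod (isCompact_closedBall (0 : ℂ) 1)).exists_bound_of_continuousOn
        (hh.continuous.fst.continuousOn)
    have hA2 : ∀ᶠ w in 𝓝 (0 : ℂ), ‖a w‖ ≤ 1 / 2 := by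
      have h1 := hta (closedBall_mem_nhds (0 : ℂ) (by norm_num : (0:ℝ) < 1 / 2))
      filter_upwards [h1] with w hw using mem_closedBall_zero_iff.mp hw
    have hB2 : ∀ᶠ w in 𝓝 (0 : ℂ), ‖bb w‖ ≤ 1 := by
      have h1 := htb (closedBall_mem_nhds (0 : ℂ) one_pos)
      filter_upwards [h1] with w hw using mem_closedBall_zero_iff.mp hw
    have hsubinv : ∀ (θ : ℝ) (x : ℂ), ‖x‖ ≤ 1 / 2 → ‖(circleMap 0 1 θ - x)⁻¹‖ ≤ 2 := by
      intro θ x hx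
      have h1 : (1 : ℝ) / 2 ≤ ‖circleMap 0 1 θ - x‖ := by
        have h2 := norm_sub_norm_le (circleMap 0 1 θ) x
        rw [hcm θ] at h2
        linarith
      rw [norm_inv]
      calc ‖circleMap 0 1 θ - x‖⁻¹ = 1 / ‖circleMap 0 1 θ - x‖ := (one_div _).symm
        _ ≤ 1 / (1 / 2) := one_div_le_one_div_of_le (by norm_num) h1
        _ = 2 := by norm_num
    have key := intervalIntegral.tendsto_integral_filter_of_dominated_convergence
      (μ := MeasureTheory.volume) (l := 𝓝 (0 : ℂ)) (a := (0:ℝ)) (b := 2 * π)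
      (F := fun (w : ℂ) (θ : ℝ) => deriv (circleMap 0 1) θ •
        (((circleMap 0 1 θ - a w)⁻¹ * (circleMap 0 1 θ)⁻¹) * (h (circleMap 0 1 θ, bb w)).1))
      (f := fun θ : ℝ => deriv (circleMap 0 1) θ •
        (((circleMap 0 1 θ - a 0)⁻¹ * (circleMap 0 1 θ)⁻¹) * (h (circleMap 0 1 θ, bb 0)).1))
      (bound := fun _ => 2 * M) ?_ ?_ intervalIntegrable_const ?_
    · exact key
    · -- measurability
      filter_upwards [hA2] with w hw
      apply Continuous.aestronglyMeasurable
      have hc1 : Continuous fun θ : ℝ => deriv (circleMap 0 1) θ := by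
        simp only [deriv_circleMap]
        exact (continuous_circleMap 0 1).mul continuous_const
      refine hc1.smul (Continuous.mul (Continuous.mul ?_ ?_) ?_)
      · exact ((continuous_circleMap 0 1).sub continuous_const).inv₀
          fun θ => hsubne θ (a w) hw
      · exact (continuous_circleMap 0 1).inv₀ hcm0
      · exact (hh.continuous.comp ((continuous_circleMap 0 1).prodMk continuous_const)).fst
    · -- bound
      filter_upwards [hA2, hB2] with w hw1 hw2
      refine Filter.Eventually.of_forall fun θ _ => ?_
      have ed : ‖deriv (circleMap 0 1) θ‖ = 1 := by
        rw [deriv_circleMap, norm_mul, hcm θ]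
        simp
      have einv : ‖(circleMap 0 1 θ)⁻¹‖ = 1 := by
        rw [norm_inv, hcm θ]; norm_num
      have e4 : ‖(h (circleMap 0 1 θ, bb w)).1‖ ≤ M :=
        hM _ (Set.mem_prod.mpr ⟨circleMap_mem_sphere 0 zero_le_one θ,
          mem_closedBall_zero_iff.mpr hw2⟩)
      rw [norm_smul, norm_mul, norm_mul, ed, einv, one_mul, mul_one]
      exact mul_le_mul (hsubinv θ _ hw1) e4 (norm_nonneg _) (by norm_num)
    · -- pointwise limit
      refine Filter.Eventually.of_forall fun θ _ => ?_
      refine Filter.Tendsto.smul tendsto_const_nhds ?_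
      refine Filter.Tendsto.mul (Filter.Tendsto.mul ?_ tendsto_const_nhds) ?_
      · refine ContinuousAt.tendsto ?_
        refine ContinuousAt.inv₀ (continuousAt_const.sub ha.continuous.continuousAt) ?_
        rw [ha0, sub_zero]
        exact hcm0 θ
      · exact ContinuousAt.tendsto
          ((hh.continuous.comp (continuous_const.prodMk hbb.continuous)).fst.continuousAt)
  have hJ0 : (2 * π * Complex.I : ℂ)⁻¹ * J 0 = lam := by
    have hK1 : Differentiable ℂ (fun x : ℂ => (h (x, (0 : ℂ))).1) :=
      (hh.comp (differentiable_id.prodMk (differentiable_const _))).fst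
    have hps := DifferentiableOn.hasFPowerSeriesOnBall (R := 1)
      (hK1.differentiableOn (s := closedBall 0 1)) one_pos
    rw [NNReal.coe_one] at hps
    have hder := hps.hasFPowerSeriesAt.deriv
    have hLD : HasDerivAt (fun x : ℂ => (h (x, (0 : ℂ))).1) lam 0 := by
      have hl2 : HasDerivAt (fun x : ℂ => (x, (0 : ℂ))) ((1 : ℂ), (0 : ℂ)) 0 :=
        (hasDerivAt_id 0).prodMk (hasDerivAt_const 0 0)
      have h1 := HasFDerivAt.comp_hasDerivAt (f := fun x : ℂ => (x, (0 : ℂ))) 0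
        (hh ((0 : ℂ), (0 : ℂ))).hasFDerivAt hl2
      rw [hz, hdh] at h1
      have h2 := fstD h1
      simpa [Function.comp] using h2
    have hJeq : J 0 = ∮ z in C(0, 1),
        ((1 : ℂ) / (z - 0)) ^ 1 • (z - 0)⁻¹ • (h (z, (0 : ℂ))).1 := by
      simp only [hJ_def]
      refine circleIntegral.integral_congr (by norm_num) fun ζ hζ => ?_
      simp only [ha0, hb0, smul_eq_mul, sub_zero, pow_one, one_div]
      ring
    rw [hLD.deriv] at hder
    rw [hJeq, hder, cauchyPowerSeries_apply, smul_eq_mul]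
  have hEv : ∀ᶠ w in 𝓝 (0 : ℂ),
      u w = k (bb w) + a w * ((2 * π * Complex.I : ℂ)⁻¹ * J w) := by
    have hA1 : ∀ᶠ w in 𝓝 (0 : ℂ), a w ∈ ball (0 : ℂ) 1 :=
      hta (ball_mem_nhds _ one_pos)
    filter_upwards [hA1] with w haw
    have hawn : ‖a w‖ < 1 := mem_ball_zero_iff.mp haw
    have hf1 : Differentiable ℂ (fun ζ : ℂ => (h (ζ, bb w)).1) :=
      (hh.comp (differentiable_id.prodMk (differentiable_const _))).fst
    have hC1 : (∮ ζ in C(0, 1), (ζ - a w)⁻¹ • (h (ζ, bb w)).1) =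
        (2 * π * Complex.I : ℂ) • (h (a w, bb w)).1 :=
      (hf1.diffContOnCl).circleIntegral_sub_inv_smul haw
    have hC2 : (∮ ζ in C(0, 1), (ζ - 0)⁻¹ • (h (ζ, bb w)).1) =
        (2 * π * Complex.I : ℂ) • (h (0, bb w)).1 :=
      (hf1.diffContOnCl).circleIntegral_sub_inv_smul (mem_ball_self one_pos)
    have hsphere : ∀ ζ ∈ sphere (0 : ℂ) 1, ζ ≠ 0 ∧ ζ - a w ≠ 0 := by
      intro ζ hζ
      have hnz : ‖ζ‖ = 1 := by simpa using hζ
      constructor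
      · intro hc; rw [hc] at hnz; simp at hnz
      · intro hc
        rw [sub_eq_zero.mp hc] at hnz
        exact absurd hnz (ne_of_lt hawn)
    have hi1 : CircleIntegrable (fun ζ => (ζ - a w)⁻¹ • (h (ζ, bb w)).1) 0 1 := by
      refine ContinuousOn.circleIntegrable (by norm_num) ?_
      refine ContinuousOn.fun_smul ?_ hf1.continuous.continuousOn
      exact ContinuousOn.inv₀ (continuousOn_id.sub continuousOn_const)
        fun ζ hζ => (hsphere ζ hζ).2
    have hi2 : CircleIntegrable (fun ζ => (ζ - 0)⁻¹ • (h (ζ, bb w)).1) 0 1 := by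
      refine ContinuousOn.circleIntegrable (by norm_num) ?_
      refine ContinuousOn.fun_smul ?_ hf1.continuous.continuousOn
      refine ContinuousOn.inv₀ (continuousOn_id.sub continuousOn_const)
        fun ζ hζ => ?_
      rw [sub_zero]
      exact (hsphere ζ hζ).1
    have hdiffInt := circleIntegral.integral_sub hi1 hi2
    have hcongr : (∮ ζ in C(0, 1),
          ((ζ - a w)⁻¹ • (h (ζ, bb w)).1 - (ζ - 0)⁻¹ • (h (ζ, bb w)).1)) =
        ∮ ζ in C(0, 1), a w • (((ζ - a w)⁻¹ * ζ⁻¹) * (h (ζ, bb w)).1) := by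
      refine circleIntegral.integral_congr (by norm_num) fun ζ hζ => ?_
      obtain ⟨hζ0, hζa⟩ := hsphere ζ hζ
      simp only [smul_eq_mul, sub_zero]
      field_simp
      ring
    have hsmul : (∮ ζ in C(0, 1), a w • (((ζ - a w)⁻¹ * ζ⁻¹) * (h (ζ, bb w)).1)) =
        a w • J w := circleIntegral.integral_smul _ _ _ _
    have e1 : (h (a w, bb w)).1 = u w := by
      simp only [hu_def, ha_def, hb_def, Function.comp_apply, Prod.mk.eta]
    have hval : a w * J w =
        2 * π * Complex.I * u w - 2 * π * Complex.I * k (bb w) := by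
      calc a w * J w = a w • J w := rfl
        _ = ∮ ζ in C(0, 1), a w • (((ζ - a w)⁻¹ * ζ⁻¹) * (h (ζ, bb w)).1) := hsmul.symm
        _ = ∮ ζ in C(0, 1),
              ((ζ - a w)⁻¹ • (h (ζ, bb w)).1 - (ζ - 0)⁻¹ • (h (ζ, bb w)).1) := hcongr.symm
        _ = (∮ ζ in C(0, 1), (ζ - a w)⁻¹ • (h (ζ, bb w)).1) -
              ∮ ζ in C(0, 1), (ζ - 0)⁻¹ • (h (ζ, bb w)).1 := hdiffInt
        _ = (2 * π * Complex.I : ℂ) • (h (a w, bb w)).1 -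
              (2 * π * Complex.I : ℂ) • (h (0, bb w)).1 := by rw [hC1, hC2]
        _ = 2 * π * Complex.I * u w - 2 * π * Complex.I * k (bb w) := by
              rw [smul_eq_mul, smul_eq_mul, e1]
    have h2pi : (2 * π * Complex.I : ℂ) ≠ 0 := two_pi_I_ne_zero
    have h3 : (2 * π * Complex.I) * u w =
        (2 * π * Complex.I) * (k (bb w) + a w * ((2 * π * Complex.I : ℂ)⁻¹ * J w)) := by
      field_simp
      linear_combination -hval
    exact mul_left_cancel₀ h2pi h3
  -- combine
  have hJlim : Tendsto (fun w => (2 * π * Complex.I : ℂ)⁻¹ * J w) (𝓝[≠] (0 : ℂ)) (𝓝 lam) := by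
    rw [← hJ0]
    exact (tendsto_const_nhds.mul hJcont).mono_left nhdsWithin_le_nhds
  have hUlim : Tendsto (fun w => u w / w ^ 2) (𝓝[≠] (0 : ℂ))
      (𝓝 (iteratedDeriv 2 (fun w => k (bb w)) 0 / 2 +
        iteratedDeriv 2 a 0 / 2 * lam)) := by
    refine (hKB.add (hA.mul hJlim)).congr' ?_
    filter_upwards [hEv.filter_mono nhdsWithin_le_nhds] with w hw
    rw [hw]
    ring
  have huniq := tendsto_nhds_unique (taylor2_tendsto u hufun hu0 huD.deriv) hUlim
  linear_combination 2 * huniq + hKBval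

/-- Shearing is compatible with composition: `(h ∘ g)^{[c]} = h^{[c]} ∘ g^{[c]}` on all of `ℂ²`. -/
theorem shearing_comp (h g : ℂ × ℂ → ℂ × ℂ)
    (hh : Differentiable ℂ h) (hg : Differentiable ℂ g)
    (h0 : h 0 = 0) (g0 : g 0 = 0)
    (lam mu lam' mu' : ℂ)
    (hlam : lam ≠ 0) (hmu : mu ≠ 0) (hlam' : lam' ≠ 0) (hmu' : mu' ≠ 0)
    (hdh : ∀ z : ℂ × ℂ, fderiv ℂ h 0 z = (lam * z.1, mu * z.2))
    (hdg : ∀ z : ℂ × ℂ, fderiv ℂ g 0 z = (lam' * z.1, mu' * z.2)) :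
    ∀ z : ℂ × ℂ,
      ((lam * lam' * z.1 + shearCoef (h ∘ g) * z.2 ^ 2, mu * mu' * z.2) : ℂ × ℂ) =
        (lam * (lam' * z.1 + shearCoef g * z.2 ^ 2) + shearCoef h * (mu' * z.2) ^ 2,
          mu * (mu' * z.2)) := by
  intro z
  have hkey := shear_key h g hh hg h0 g0 lam mu lam' mu' hdh hdg
  simp only [shearCoef, Prod.mk.injEq]
  refine ⟨?_, by ring⟩
  rw [hkey]
  ring
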